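/- Let P be a nonconstant polynomial over ℂ with factorization P = C·∏ᵢ₌₁ʳ (X − rᵢ)^{mᵢ}, where C ≠ 0, the rᵢ are pairwise distinct complex numbers and mᵢ ≥ 1. Define the sequence τ₀ = P and τ_k = gcd(τ_{k−1}, τ_{k−1}′) for k ≥ 1. Then for every k ≥ 0, τ_k is a nonzero polynomial associated to ∏ᵢ₌₁ʳ (X − rᵢ)^{max(mᵢ − k, 0)}. -/

import Mathlib

open Polynomial

private lemma prodp_ne_zero {n : ℕ} (r : Fin n → ℂ) (e : Fin n → ℕ) :
    (∏ i, (X - Polynomial.C (r i)) ^ e i) ≠ 0 :=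
  Finset.prod_ne_zero_iff.mpr fun _ _ => pow_ne_zero _ (X_sub_C_ne_zero _)

private lemma count_roots_prodp_aux {n : ℕ} (r : Fin n → ℂ) (e : Fin n → ℕ) (a : ℂ) :
    Multiset.count a (∏ j, (X - Polynomial.C (r j)) ^ e j).roots
      = ∑ j, Multiset.count a (e j • ({r j} : Multiset ℂ)) := by
  classical
  rw [Polynomial.roots_prod _ _ (prodp_ne_zero r e)]
  simp only [Polynomial.roots_pow, Polynomial.roots_X_sub_C, Multiset.count_bind]
  rfl

private lemma count_roots_prodp {n : ℕ} (r : Fin n → ℂ) (hr : Function.Injective r)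
    (e : Fin n → ℕ) (i : Fin n) :
    Multiset.count (r i) (∏ j, (X - Polynomial.C (r j)) ^ e j).roots = e i := by
  classical
  rw [count_roots_prodp_aux]
  rw [Finset.sum_eq_single i]
  · simp
  · intro j _ hj
    have h : r i ≠ r j := fun h => hj (hr h.symm)
    simp [Multiset.count_singleton, h]
  · simp

private lemma count_roots_prodp_notmem {n : ℕ} (r : Fin n → ℂ) (e : Fin n → ℕ)
    {a : ℂ} (ha : ∀ i, r i ≠ a) :
    Multiset.count a (∏ j, (X - Polynomial.C (r j)) ^ e j).roots = 0 := by
  classical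
  rw [count_roots_prodp_aux]
  refine Finset.sum_eq_zero fun j _ => ?_
  rw [Multiset.count_nsmul, Multiset.count_singleton, if_neg (fun h => ha j h.symm), mul_zero]

theorem iterated_gcd_sequence_of_factored (P : Polynomial ℂ) (c : ℂ) (n : ℕ)
    (r : Fin n → ℂ) (m : Fin n → ℕ) (hc : c ≠ 0) (hr : Function.Injective r)
    (hm : ∀ i, 1 ≤ m i)
    (hP : P = Polynomial.C c * ∏ i, (X - Polynomial.C (r i)) ^ m i)
    (hdeg : 0 < P.degree)
    (τ : ℕ → Polynomial ℂ) (hτ0 : τ 0 = P)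
    (hτ : ∀ k, τ (k + 1) = EuclideanDomain.gcd (τ k) (Polynomial.derivative (τ k))) :
    ∀ k, τ k ≠ 0 ∧ Associated (τ k) (∏ i, (X - Polynomial.C (r i)) ^ (m i - k)) := by
  classical
  intro k
  induction k with
  | zero =>
      constructor
      · rw [hτ0, hP]
        exact mul_ne_zero (by simpa using hc) (prodp_ne_zero r m)
      · rw [hτ0, hP]
        simp only [Nat.sub_zero]
        refine Associated.symm ⟨(Polynomial.isUnit_C.mpr hc.isUnit).unit, ?_⟩
        rw [IsUnit.unit_spec, mul_comm]
  | succ k ih =>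
      obtain ⟨hne, hass⟩ := ih
      set G : Polynomial ℂ := ∏ i, (X - Polynomial.C (r i)) ^ (m i - k) with hG
      have hGne : G ≠ 0 := prodp_ne_zero r _
      obtain ⟨u, hu⟩ := hass
      by_cases hconst : ∀ i, m i ≤ k
      · have hG1 : G = 1 := by
          rw [hG]
          exact Finset.prod_eq_one fun i _ => by
            rw [Nat.sub_eq_zero_of_le (hconst i), pow_zero]
        have hunit : IsUnit (τ k) := IsUnit.of_mul_eq_one _ (hG1 ▸ hu)
        obtain ⟨a, ha⟩ := Polynomial.isUnit_iff.mp hunit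
        have hder : Polynomial.derivative (τ k) = 0 := by
          rw [← ha.2, derivative_C]
        have hτ1 : τ (k + 1) = τ k := by
          rw [hτ k, hder, EuclideanDomain.gcd_zero_right]
        have hG1' : (∏ i, (X - Polynomial.C (r i)) ^ (m i - (k + 1))) = 1 :=
          Finset.prod_eq_one fun i _ => by
            rw [Nat.sub_eq_zero_of_le (le_trans (hconst i) (Nat.le_succ k)), pow_zero]
        rw [hτ1, hG1']
        exact ⟨hne, associated_one_iff_isUnit.mpr hunit⟩
      · push_neg at hconst
        obtain ⟨i₀, hi₀⟩ := hconst
        obtain ⟨a, ha0, hau⟩ : ∃ a : ℂ, a ≠ 0 ∧ (u : Polynomial ℂ) = Polynomial.C a := by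
          obtain ⟨a, ha⟩ := Polynomial.isUnit_iff.mp u.isUnit
          exact ⟨a, ha.1.ne_zero, ha.2.symm⟩
        have hb0 : a⁻¹ ≠ 0 := inv_ne_zero ha0
        have hτk : τ k = Polynomial.C a⁻¹ * G := by
          rw [← hu, hau, mul_comm (Polynomial.C a⁻¹), mul_assoc, ← Polynomial.C_mul,
            mul_inv_cancel₀ ha0, Polynomial.C_1, mul_one]
        have hrootsτ : (τ k).roots = G.roots := by
          rw [hτk, Polynomial.roots_C_mul _ hb0]
        have hGdeg : 0 < G.natDegree := by
          have hdvd : (X - Polynomial.C (r i₀)) ^ (m i₀ - k) ∣ G :=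
            Finset.dvd_prod_of_mem _ (Finset.mem_univ i₀)
          have hd := Polynomial.natDegree_le_of_dvd hdvd hGne
          have hnd : ((X - Polynomial.C (r i₀)) ^ (m i₀ - k)).natDegree = m i₀ - k := by
            rw [Polynomial.natDegree_pow, Polynomial.natDegree_X_sub_C, mul_one]
          omega
        have hGder : Polynomial.derivative G ≠ 0 := by
          intro h
          have := Polynomial.natDegree_eq_zero_of_derivative_eq_zero h
          omega
        have hτder : Polynomial.derivative (τ k)
            = Polynomial.C a⁻¹ * Polynomial.derivative G := by
          rw [hτk, derivative_C_mul]
        have hτderne : Polynomial.derivative (τ k) ≠ 0 := by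
          rw [hτder]
          exact mul_ne_zero (by simpa using hb0) hGder
        have hrootsτder : (Polynomial.derivative (τ k)).roots
            = (Polynomial.derivative G).roots := by
          rw [hτder, Polynomial.roots_C_mul _ hb0]
        have hgne : τ (k + 1) ≠ 0 := by
          rw [hτ k]
          intro h
          exact hne (EuclideanDomain.gcd_eq_zero_iff.mp h).1
        set H : Polynomial ℂ := ∏ i, (X - Polynomial.C (r i)) ^ (m i - (k + 1)) with hH
        have hHne : H ≠ 0 := prodp_ne_zero r _
        refine ⟨hgne, ?_⟩
        have hcount : ∀ x : ℂ, (τ (k+1)).rootMultiplicity x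
            = min ((τ k).rootMultiplicity x)
                ((Polynomial.derivative (τ k)).rootMultiplicity x) := by
          intro x
          apply le_antisymm
          · apply le_min
            · exact (Polynomial.le_rootMultiplicity_iff hne).mpr
                (dvd_trans (Polynomial.pow_rootMultiplicity_dvd _ x)
                  (hτ k ▸ EuclideanDomain.gcd_dvd_left _ _))
            · exact (Polynomial.le_rootMultiplicity_iff hτderne).mpr
                (dvd_trans (Polynomial.pow_rootMultiplicity_dvd _ x)
                  (hτ k ▸ EuclideanDomain.gcd_dvd_right _ _))
          · rw [Polynomial.le_rootMultiplicity_iff hgne, hτ k]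
            exact EuclideanDomain.dvd_gcd
              (dvd_trans (pow_dvd_pow _ (min_le_left _ _))
                (Polynomial.pow_rootMultiplicity_dvd _ x))
              (dvd_trans (pow_dvd_pow _ (min_le_right _ _))
                (Polynomial.pow_rootMultiplicity_dvd _ x))
        have hroots : (τ (k+1)).roots = H.roots := by
          ext x
          rw [Polynomial.count_roots, Polynomial.count_roots, hcount x]
          by_cases hx : ∃ i, r i = x
          · obtain ⟨i, rfl⟩ := hx
            have h1 : (τ k).rootMultiplicity (r i) = m i - k := by
              rw [← Polynomial.count_roots, hrootsτ, hG, count_roots_prodp r hr]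
            have h3 : H.rootMultiplicity (r i) = m i - (k+1) := by
              rw [← Polynomial.count_roots, hH, count_roots_prodp r hr]
            rw [h3, h1]
            by_cases hik : m i ≤ k
            · have hz : m i - (k+1) = 0 := by omega
              rw [Nat.sub_eq_zero_of_le hik, hz]
              simp
            · have hmG : G.rootMultiplicity (r i) = m i - k := by
                rw [← Polynomial.count_roots, hG, count_roots_prodp r hr]
              have hroot : G.IsRoot (r i) :=
                (Polynomial.rootMultiplicity_pos hGne).mp (by omega)
              have h2 : (Polynomial.derivative (τ k)).rootMultiplicity (r i)
                  = (m i - k) - 1 := by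
                rw [← Polynomial.count_roots, hrootsτder, Polynomial.count_roots,
                  Polynomial.derivative_rootMultiplicity_of_root hroot, hmG]
              rw [h2]
              omega
          · push_neg at hx
            have h1 : (τ k).rootMultiplicity x = 0 := by
              rw [← Polynomial.count_roots, hrootsτ, hG, count_roots_prodp_notmem r _ hx]
            have h3 : H.rootMultiplicity x = 0 := by
              rw [← Polynomial.count_roots, hH, count_roots_prodp_notmem r _ hx]
            rw [h3, h1]
            simp
        exact associated_of_dvd_dvd
          ((IsAlgClosed.splits _).dvd_of_roots_le_roots hgne (le_of_eq hroots))
          ((IsAlgClosed.splits _).dvd_of_roots_le_roots hHne (le_of_eq hroots.symm))
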